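/- Let α > 0, β > 0, m ≥ 1 and q > 0. Then the Γ(mα, mβ)-measure of the set {x > 0 : β·x ≤ q} equals the Γ(mα, m)-measure of (0, q]. Consequently, if F denotes the cumulative distribution function of Γ(mα, m) and q satisfies F(q) = 1 − ã for some 0 < ã < 1, then the probability under X̄ ∼ Γ(mα, mβ) that β lies in the interval [0, q/X̄] equals 1 − ã; i.e. the Bayesian 1−ã credible interval [0, q/x̄] is also a frequentist 1−ã confidence interval for the rate β of the Gamma family with known shape α. -/

import Mathlib

open MeasureTheory ProbabilityTheory Real Set

/-- CDF of the gamma distribution (removed from Mathlib; old definition restored). -/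
noncomputable def gammaCDFReal (a r : ℝ) : StieltjesFunction ℝ :=
  cdf (gammaMeasure a r)

lemma gammaPDF_scale {a r c : ℝ} (ha : 0 < a) (hr : 0 < r) (hc : 0 < c) (x : ℝ) :
    gammaPDF a (r * c) x = ENNReal.ofReal c * gammaPDF a r (c * x) := by
  rcases lt_or_ge x 0 with hx | hx
  · rw [gammaPDF_of_neg hx, gammaPDF_of_neg (by nlinarith), mul_zero]
  · rw [gammaPDF_of_nonneg hx, gammaPDF_of_nonneg (by positivity),
      ← ENNReal.ofReal_mul hc.le]
    congr 1
    have h1 : (c * x) ^ (a - 1) = c ^ (a - 1) * x ^ (a - 1) :=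
      Real.mul_rpow hc.le hx
    have h2 : (r * c) ^ a = r ^ a * c ^ a := Real.mul_rpow hr.le hc.le
    have h3 : c ^ (a - 1) = c ^ a / c := by
      rw [Real.rpow_sub hc, Real.rpow_one]
    rw [h1, h2, h3]
    have hexp : Real.exp (-(r * c * x)) = Real.exp (-(r * (c * x))) := by ring_nf
    rw [hexp]
    field_simp

lemma gammaMeasure_scale {a r c q : ℝ} (ha : 0 < a) (hr : 0 < r) (hc : 0 < c) :
    gammaMeasure a (r * c) (Set.Ioc 0 (q / c)) = gammaMeasure a r (Set.Ioc 0 q) := by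
  have hmeas : Measurable (gammaPDF a r) :=
    (measurable_gammaPDFReal a r).ennreal_ofReal
  have hpre : (fun x : ℝ => c * x) ⁻¹' Set.Ioc 0 q = Set.Ioc 0 (q / c) := by
    ext x
    simp only [Set.mem_preimage, Set.mem_Ioc]
    constructor
    · rintro ⟨h1, h2⟩
      exact ⟨by nlinarith, by rwa [le_div_iff₀ hc, mul_comm]⟩
    · rintro ⟨h1, h2⟩
      refine ⟨by positivity, ?_⟩
      rw [mul_comm]
      rwa [le_div_iff₀ hc] at h2
  rw [gammaMeasure, gammaMeasure, withDensity_apply _ measurableSet_Ioc,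
    withDensity_apply _ measurableSet_Ioc]
  calc ∫⁻ x in Set.Ioc 0 (q / c), gammaPDF a (r * c) x
      = ∫⁻ x in Set.Ioc 0 (q / c), ENNReal.ofReal c * gammaPDF a r (c * x) := by
        simp_rw [gammaPDF_scale ha hr hc]
    _ = ENNReal.ofReal c * ∫⁻ x in Set.Ioc 0 (q / c), gammaPDF a r (c * x) := by
        rw [lintegral_const_mul' _ _ ENNReal.ofReal_ne_top]
    _ = ENNReal.ofReal c * ∫⁻ y, gammaPDF a r y
          ∂(Measure.map (fun x : ℝ => c * x) (volume.restrict (Set.Ioc 0 (q / c)))) := by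
        rw [lintegral_map hmeas (measurable_const_mul c)]
    _ = ENNReal.ofReal c * ∫⁻ y, gammaPDF a r y
          ∂((Measure.map (fun x : ℝ => c * x) volume).restrict (Set.Ioc 0 q)) := by
        rw [← hpre, Measure.restrict_map (measurable_const_mul c) measurableSet_Ioc]
    _ = ENNReal.ofReal c * (ENNReal.ofReal |c⁻¹| * ∫⁻ y in Set.Ioc 0 q, gammaPDF a r y) := by
        rw [Real.map_volume_mul_left hc.ne', Measure.restrict_smul, lintegral_smul_measure, smul_eq_mul]
    _ = ∫⁻ y in Set.Ioc 0 q, gammaPDF a r y := by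
        rw [← mul_assoc, abs_of_pos (inv_pos.mpr hc), ← ENNReal.ofReal_mul hc.le,
          mul_inv_cancel₀ hc.ne', ENNReal.ofReal_one, one_mul]

lemma gammaMeasure_Ioc {a r q : ℝ} (ha : 0 < a) (hr : 0 < r) (hq : 0 < q) :
    gammaMeasure a r (Set.Ioc 0 q) = ENNReal.ofReal (gammaCDFReal a r q) := by
  have : IsProbabilityMeasure (gammaMeasure a r) := isProbabilityMeasure_gammaMeasure ha hr
  have h0 : gammaMeasure a r (Set.Iic 0) = 0 := by
    rw [gammaMeasure, withDensity_apply _ measurableSet_Iic,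
      lintegral_Iic_eq_lintegral_Iio_add_Icc _ le_rfl,
      lintegral_gammaPDF_of_nonpos le_rfl, zero_add, Set.Icc_self,
      Measure.restrict_singleton, Real.volume_singleton, zero_smul, lintegral_zero_measure]
  have hsplit : gammaMeasure a r (Set.Iic q) = gammaMeasure a r (Set.Ioc 0 q) := by
    rw [← Set.Iic_union_Ioc_eq_Iic hq.le, measure_union _ measurableSet_Ioc, h0, zero_add]
    exact Set.Iic_disjoint_Ioc le_rfl
  rw [gammaCDFReal, cdf_eq_real, measureReal_def, hsplit, ENNReal.ofReal_toReal (measure_ne_top _ _)]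

theorem gamma_credible_eq_confidence (m : ℕ) (hm : 1 ≤ m) (α β q : ℝ)
    (hα : 0 < α) (hβ : 0 < β) (hq : 0 < q) :
    gammaMeasure ((m : ℝ) * α) ((m : ℝ) * β) {x : ℝ | 0 < x ∧ β * x ≤ q} =
      gammaMeasure ((m : ℝ) * α) (m : ℝ) (Set.Ioc 0 q) ∧
    ∀ at_ : ℝ, 0 < at_ → at_ < 1 →
      gammaCDFReal ((m : ℝ) * α) (m : ℝ) q = 1 - at_ →
      gammaMeasure ((m : ℝ) * α) ((m : ℝ) * β) {x : ℝ | β ∈ Set.Icc 0 (q / x)} =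
        ENNReal.ofReal (1 - at_) := by
  have hm' : (0 : ℝ) < m := by exact_mod_cast hm
  have ha : 0 < (m : ℝ) * α := by positivity
  have hset : {x : ℝ | 0 < x ∧ β * x ≤ q} = Set.Ioc 0 (q / β) := by
    ext x
    simp only [Set.mem_setOf_eq, Set.mem_Ioc]
    rw [le_div_iff₀ hβ, mul_comm]
  have key : gammaMeasure ((m : ℝ) * α) ((m : ℝ) * β) {x : ℝ | 0 < x ∧ β * x ≤ q} =
      gammaMeasure ((m : ℝ) * α) (m : ℝ) (Set.Ioc 0 q) := by
    rw [hset]; exact gammaMeasure_scale ha hm' hβ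
  refine ⟨key, fun at_ h1 h2 hF => ?_⟩
  have hset2 : {x : ℝ | β ∈ Set.Icc 0 (q / x)} = {x : ℝ | 0 < x ∧ β * x ≤ q} := by
    ext x
    simp only [Set.mem_setOf_eq, Set.mem_Icc]
    constructor
    · rintro ⟨-, h2'⟩
      rcases lt_trichotomy x 0 with hx | hx | hx
      · exact absurd h2' (not_le.mpr ((div_neg_of_pos_of_neg hq hx).trans_le hβ.le))
      · rw [hx, div_zero] at h2'; exact absurd h2' (not_le.mpr hβ)
      · exact ⟨hx, by rwa [le_div_iff₀ hx] at h2'⟩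
    · rintro ⟨hx, hle⟩
      exact ⟨hβ.le, by rwa [le_div_iff₀ hx]⟩
  rw [hset2, key, gammaMeasure_Ioc ha hm' hq, hF]
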